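/- Let W(·|x) = N(x, N·I_n) on ℝⁿ and q = N(0, (Γ + N)·I_n). Let X ~ P̄ for any Borel probability measure P̄ on ℝⁿ, and Y = X + Z with Z ~ N(0, N·I_n) independent of X. Then log(W(Y|X)/q(Y)) has the same distribution as n·C(Γ) + nS/(2Γ) − (Γ/(2(N+Γ)))·Σ_{i=1}^n (Z̃_i − √(NS)/Γ)², where S = ||X||²/n, the Z̃_i are i.i.d. standard normal independent of S, and C(Γ) = (1/2)·log(1 + Γ/N). -/

import Mathlib

open MeasureTheory ProbabilityTheory Real
open scoped NNReal ENNReal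

lemma aux_lintegral_pi (n : ℕ) (μ : Measure ℝ) [SigmaFinite μ]
    (f : Fin n → ℝ → ℝ≥0∞) (hf : ∀ i, Measurable (f i)) :
    ∫⁻ x, ∏ i, f i (x i) ∂(Measure.pi fun _ : Fin n => μ) = ∏ i, ∫⁻ y, f i y ∂μ := by
  induction n with
  | zero => simp [Measure.pi_of_empty]
  | succ n ih =>
    have e := measurePreserving_piFinSuccAbove (fun _ : Fin (n+1) => μ) 0
    have hF : Measurable fun p : ℝ × (Fin n → ℝ) => f 0 p.1 * ∏ j, f j.succ (p.2 j) := by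
      apply ((hf 0).comp measurable_fst).mul
      exact Finset.measurable_prod _ fun j _ =>
        (hf j.succ).comp ((measurable_pi_apply j).comp measurable_snd)
    have key := e.lintegral_comp hF
    have hfe : ∀ x : Fin (n+1) → ℝ,
        f 0 ((MeasurableEquiv.piFinSuccAbove (fun _ => ℝ) 0) x).1 *
          ∏ j, f j.succ (((MeasurableEquiv.piFinSuccAbove (fun _ => ℝ) 0) x).2 j)
        = ∏ i, f i (x i) := by
      intro x
      rw [Fin.prod_univ_succ]
      simp [MeasurableEquiv.piFinSuccAbove, Fin.succAbove_zero, Fin.tail]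
    calc ∫⁻ x, ∏ i, f i (x i) ∂(Measure.pi fun _ : Fin (n+1) => μ)
        = ∫⁻ p, f 0 p.1 * ∏ j, f j.succ (p.2 j)
            ∂(μ.prod (Measure.pi fun _ : Fin n => μ)) := by
          rw [← key]; exact lintegral_congr fun x => (hfe x).symm
      _ = (∫⁻ y, f 0 y ∂μ) * ∏ j : Fin n, ∫⁻ y, f j.succ y ∂μ := by
          have h2 : AEMeasurable (fun y : Fin n → ℝ => ∏ j, f j.succ (y j))
              (Measure.pi fun _ : Fin n => μ) :=
            (Finset.measurable_prod _ fun j _ =>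
              (hf j.succ).comp (measurable_pi_apply j)).aemeasurable
          have := lintegral_prod_mul (μ := μ) (ν := Measure.pi fun _ : Fin n => μ)
            (f := f 0) (g := fun y => ∏ j, f j.succ (y j)) (hf 0).aemeasurable h2
          rw [this, ih (fun j => f j.succ) (fun j => hf j.succ)]
      _ = ∏ i, ∫⁻ y, f i y ∂μ := (Fin.prod_univ_succ fun i => ∫⁻ y, f i y ∂μ).symm

lemma aux_withDensity_map {α β : Type*} [MeasurableSpace α] [MeasurableSpace β]
    (e : α ≃ᵐ β) (μ : Measure α) {f : β → ℝ≥0∞} (hf : Measurable f) :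
    Measure.map e (μ.withDensity (f ∘ e)) = (Measure.map e μ).withDensity f := by
  ext s hs
  rw [Measure.map_apply e.measurable hs, withDensity_apply _ hs,
    withDensity_apply _ (e.measurable hs), setLIntegral_map hs hf e.measurable]
  rfl

lemma aux_pi_gauss_withDensity (n : ℕ) :
    Measure.pi (fun _ : Fin n => gaussianReal 0 1)
      = (volume : Measure (Fin n → ℝ)).withDensity fun x => ∏ i, gaussianPDF 0 1 (x i) := by
  apply Measure.pi_eq
  intro s hs
  have hmeas : MeasurableSet (Set.univ.pi s) := MeasurableSet.univ_pi hs
  rw [withDensity_apply _ hmeas, ← lintegral_indicator hmeas _]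
  have hpt : ∀ x : Fin n → ℝ,
      (Set.univ.pi s).indicator (fun x => ∏ i, gaussianPDF 0 1 (x i)) x
        = ∏ i, (s i).indicator (gaussianPDF 0 1) (x i) := by
    intro x
    by_cases hx : x ∈ Set.univ.pi s
    · rw [Set.indicator_of_mem hx]
      exact Finset.prod_congr rfl fun i _ =>
        (Set.indicator_of_mem (hx i (Set.mem_univ i)) _).symm
    · rw [Set.indicator_of_notMem hx]
      simp only [Set.mem_univ_pi, not_forall] at hx
      obtain ⟨i, hi⟩ := hx
      exact (Finset.prod_eq_zero (Finset.mem_univ i)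
        (by rw [Set.indicator_of_notMem hi])).symm
  rw [lintegral_congr hpt, MeasureTheory.volume_pi, aux_lintegral_pi n volume
    (fun i => (s i).indicator (gaussianPDF 0 1))
    (fun i => (measurable_gaussianPDF 0 1).indicator (hs i))]
  refine Finset.prod_congr rfl fun i _ => ?_
  rw [lintegral_indicator (hs i) _, gaussianReal_apply 0 one_ne_zero (s i)]

noncomputable def stdGaussE (n : ℕ) : Measure (EuclideanSpace ℝ (Fin n)) :=
  volume.withDensity fun u => ENNReal.ofReal ((Real.sqrt (2*π))⁻¹ ^ n * Real.exp (-‖u‖^2/2))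

lemma aux_norm_sq_eq (n : ℕ) (u : EuclideanSpace ℝ (Fin n)) : ‖u‖^2 = ∑ i, (u i)^2 := by
  rw [EuclideanSpace.norm_eq, Real.sq_sqrt (by positivity)]
  exact Finset.sum_congr rfl fun i _ => by rw [Real.norm_eq_abs, sq_abs]

lemma aux_density_meas (n : ℕ) :
    Measurable fun u : EuclideanSpace ℝ (Fin n) =>
      ENNReal.ofReal ((Real.sqrt (2*π))⁻¹ ^ n * Real.exp (-‖u‖^2/2)) := by
  apply ENNReal.measurable_ofReal.comp
  exact (continuous_const.mul (((continuous_norm.pow 2).neg.div_const 2).rexp)).measurable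

lemma aux_map_gaussE (n : ℕ) :
    Measure.map ((MeasurableEquiv.toLp 2 (Fin n → ℝ)).symm) (stdGaussE n)
      = Measure.pi (fun _ : Fin n => gaussianReal 0 1) := by
  have hfm : Measurable (fun x : Fin n → ℝ => ∏ i, gaussianPDF 0 1 (x i)) :=
    Finset.measurable_prod _ fun i _ =>
      (measurable_gaussianPDF 0 1).comp (measurable_pi_apply i)
  have hcomp : (fun x : Fin n → ℝ => ∏ i, gaussianPDF 0 1 (x i))
        ∘ ((MeasurableEquiv.toLp 2 (Fin n → ℝ)).symm)
      = fun u => ENNReal.ofReal ((Real.sqrt (2*π))⁻¹ ^ n * Real.exp (-‖u‖^2/2)) := by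
    funext u
    have h1 : ∀ i : Fin n,
        gaussianPDF 0 1 (((MeasurableEquiv.toLp 2 (Fin n → ℝ)).symm) u i)
          = ENNReal.ofReal (gaussianPDFReal 0 1 (u i)) := fun i => rfl
    calc (∏ i, gaussianPDF 0 1 (((MeasurableEquiv.toLp 2 (Fin n → ℝ)).symm) u i))
        = ∏ i, ENNReal.ofReal (gaussianPDFReal 0 1 (u i)) :=
          Finset.prod_congr rfl fun i _ => h1 i
      _ = ENNReal.ofReal (∏ i, gaussianPDFReal 0 1 (u i)) :=
          (ENNReal.ofReal_prod_of_nonneg fun i _ => gaussianPDFReal_nonneg 0 1 (u i)).symm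
      _ = ENNReal.ofReal ((Real.sqrt (2*π))⁻¹ ^ n * Real.exp (-‖u‖^2/2)) := by
          congr 1
          simp only [gaussianPDFReal_def, NNReal.coe_one, mul_one, sub_zero]
          rw [Finset.prod_mul_distrib, Finset.prod_const, Finset.card_univ, Fintype.card_fin,
            ← Real.exp_sum, aux_norm_sq_eq]
          congr 1
          rw [← Finset.sum_div, Finset.sum_neg_distrib, neg_div]
  rw [stdGaussE, ← hcomp,
    aux_withDensity_map ((MeasurableEquiv.toLp 2 (Fin n → ℝ)).symm) volume hfm,
    (EuclideanSpace.volume_preserving_symm_measurableEquiv_toLp (Fin n)).map_eq,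
    aux_pi_gauss_withDensity n]

lemma aux_gaussE_invariant (n : ℕ)
    (O : EuclideanSpace ℝ (Fin n) ≃ₗᵢ[ℝ] EuclideanSpace ℝ (Fin n)) :
    Measure.map O (stdGaussE n) = stdGaussE n := by
  set m : EuclideanSpace ℝ (Fin n) ≃ᵐ EuclideanSpace ℝ (Fin n) :=
    O.toHomeomorph.toMeasurableEquiv with hm
  have hcoe : (⇑m : EuclideanSpace ℝ (Fin n) → EuclideanSpace ℝ (Fin n)) = ⇑O := rfl
  have hD := aux_density_meas n
  have hDO : (fun u : EuclideanSpace ℝ (Fin n) =>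
        ENNReal.ofReal ((Real.sqrt (2*π))⁻¹ ^ n * Real.exp (-‖u‖^2/2))) ∘ m
      = fun u => ENNReal.ofReal ((Real.sqrt (2*π))⁻¹ ^ n * Real.exp (-‖u‖^2/2)) := by
    funext u
    simp only [Function.comp_apply, hcoe, O.norm_map]
  rw [stdGaussE, ← hcoe, ← hDO, aux_withDensity_map m volume hD, hDO]
  have : Measure.map m (volume : Measure (EuclideanSpace ℝ (Fin n))) = volume := by
    rw [hcoe]; exact O.measurePreserving.map_eq
  rw [this]

lemma aux_key_E (n : ℕ) (a b : EuclideanSpace ℝ (Fin n)) (hab : ‖a‖ = ‖b‖) :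
    Measure.map (fun u : EuclideanSpace ℝ (Fin n) => ((inner ℝ a u : ℝ), ‖u‖^2)) (stdGaussE n)
      = Measure.map (fun u : EuclideanSpace ℝ (Fin n) => ((inner ℝ b u : ℝ), ‖u‖^2))
          (stdGaussE n) := by
  set O := Submodule.reflection (Submodule.span ℝ {a - b})ᗮ with hO
  have hOa : O a = b := Submodule.reflection_sub hab
  have hmp : ∀ c : EuclideanSpace ℝ (Fin n),
      Measurable fun u : EuclideanSpace ℝ (Fin n) => ((inner ℝ c u : ℝ), ‖u‖^2) := fun c =>
    ((continuous_const.inner continuous_id).prodMk (continuous_norm.pow 2)).measurable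
  conv_rhs => rw [← aux_gaussE_invariant n O]
  rw [Measure.map_map (hmp b) O.continuous.measurable]
  congr 1
  funext u
  simp only [Function.comp_apply]
  rw [← hOa, O.inner_map_map, O.norm_map]

lemma aux_key_pi (n : ℕ) (a b : Fin n → ℝ) (hab : ∑ i, a i ^ 2 = ∑ i, b i ^ 2) :
    Measure.map (fun u : Fin n → ℝ => (∑ i, a i * u i, ∑ i, (u i)^2))
        (Measure.pi fun _ : Fin n => gaussianReal 0 1)
      = Measure.map (fun u : Fin n → ℝ => (∑ i, b i * u i, ∑ i, (u i)^2))
          (Measure.pi fun _ : Fin n => gaussianReal 0 1) := by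
  have hmeas : ∀ c : Fin n → ℝ,
      Measurable fun u : Fin n → ℝ => (∑ i, c i * u i, ∑ i, (u i)^2) := fun c =>
    ((Finset.measurable_sum _ fun i _ =>
        (measurable_pi_apply i : Measurable fun u : Fin n → ℝ => u i).const_mul (c i)).prodMk
      (Finset.measurable_sum _ fun i _ => (measurable_pi_apply i).pow_const 2))
  have hcomp : ∀ c : Fin n → ℝ,
      (fun u : Fin n → ℝ => (∑ i, c i * u i, ∑ i, (u i)^2))
          ∘ ((MeasurableEquiv.toLp 2 (Fin n → ℝ)).symm)
        = fun v : EuclideanSpace ℝ (Fin n) =>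
            ((inner ℝ ((WithLp.equiv 2 (Fin n → ℝ)).symm c) v : ℝ), ‖v‖^2) := by
    intro c
    funext v
    simp only [Function.comp_apply]
    rw [aux_norm_sq_eq n v, PiLp.inner_apply]
    simp [mul_comm]
  have hnorm : ‖(WithLp.equiv 2 (Fin n → ℝ)).symm a‖ = ‖(WithLp.equiv 2 (Fin n → ℝ)).symm b‖ := by
    rw [EuclideanSpace.norm_eq, EuclideanSpace.norm_eq]
    congr 1
    calc (∑ i, ‖(WithLp.equiv 2 (Fin n → ℝ)).symm a i‖ ^ 2)
        = ∑ i, a i ^ 2 := Finset.sum_congr rfl fun i _ => by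
          rw [Real.norm_eq_abs, sq_abs]; rfl
      _ = ∑ i, b i ^ 2 := hab
      _ = ∑ i, ‖(WithLp.equiv 2 (Fin n → ℝ)).symm b i‖ ^ 2 :=
          Finset.sum_congr rfl fun i _ => by rw [Real.norm_eq_abs, sq_abs]; rfl
  rw [← aux_map_gaussE n, Measure.map_map (hmeas a) (MeasurableEquiv.measurable _),
    Measure.map_map (hmeas b) (MeasurableEquiv.measurable _), hcomp a, hcomp b]
  exact aux_key_E n _ _ hnorm

lemma aux_log_gauss (μ : ℝ) (v : ℝ≥0) (hv : 0 < v) (y : ℝ) :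
    Real.log (gaussianPDFReal μ v y)
      = -((1:ℝ)/2) * Real.log (2*π*v) - (y-μ)^2/(2*v) := by
  have hv' : (0:ℝ) < 2*π*v := by positivity
  rw [gaussianPDFReal_def]
  rw [Real.log_mul (by positivity) (Real.exp_ne_zero _), Real.log_inv, Real.log_exp,
    Real.log_sqrt hv'.le]
  ring

lemma aux_logpdf (n : ℕ) (N Γ : ℝ≥0) (hN : 0 < N) (hΓ : 0 < Γ) (x z : Fin n → ℝ) :
    Real.log ((∏ i, gaussianPDFReal (x i) N (x i + z i)) /
        ∏ i, gaussianPDFReal 0 (Γ + N) (x i + z i))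
      = (n : ℝ) * ((1/2) * Real.log (1 + (Γ:ℝ)/N))
        + (∑ i, (x i + z i)^2) / (2*((N:ℝ)+Γ)) - (∑ i, (z i)^2) / (2*(N:ℝ)) := by
  have hNr : (0:ℝ) < N := hN
  have hΓr : (0:ℝ) < Γ := hΓ
  have hGN : (0 : ℝ≥0) < Γ + N := by positivity
  have hA : ∀ i : Fin n, gaussianPDFReal (x i) N (x i + z i) ≠ 0 :=
    fun i => (gaussianPDFReal_pos _ _ _ hN.ne').ne'
  have hB : ∀ i : Fin n, gaussianPDFReal 0 (Γ + N) (x i + z i) ≠ 0 :=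
    fun i => (gaussianPDFReal_pos _ _ _ hGN.ne').ne'
  rw [Real.log_div (Finset.prod_ne_zero_iff.mpr fun i _ => hA i)
      (Finset.prod_ne_zero_iff.mpr fun i _ => hB i),
    Real.log_prod (fun i _ => hA i), Real.log_prod (fun i _ => hB i),
    Finset.sum_congr rfl (fun i _ => aux_log_gauss (x i) N hN (x i + z i)),
    Finset.sum_congr rfl (fun i _ => aux_log_gauss 0 (Γ + N) hGN (x i + z i))]
  have hc : ((Γ + N : ℝ≥0) : ℝ) = (N:ℝ) + Γ := by push_cast; ring
  simp only [hc, add_sub_cancel_left, sub_zero]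
  rw [Finset.sum_sub_distrib, Finset.sum_sub_distrib, Finset.sum_const, Finset.card_univ,
    Fintype.card_fin, ← Finset.sum_div, ← Finset.sum_div, nsmul_eq_mul, Finset.sum_const,
    Finset.card_univ, Fintype.card_fin, nsmul_eq_mul]
  have hlogdiff : Real.log (1 + (Γ:ℝ)/N)
      = Real.log (2*π*((N:ℝ)+Γ)) - Real.log (2*π*(N:ℝ)) := by
    have h1 : 1 + (Γ:ℝ)/N = (2*π*((N:ℝ)+Γ))/(2*π*(N:ℝ)) := by
      field_simp
    rw [h1, Real.log_div (by positivity) (by positivity)]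
  rw [hlogdiff]
  ring

lemma aux_pi_scale (n : ℕ) (N : ℝ≥0) (hN : 0 < N) :
    Measure.pi (fun _ : Fin n => gaussianReal 0 N)
      = Measure.map (fun u : Fin n → ℝ => fun i => Real.sqrt N * u i)
          (Measure.pi fun _ : Fin n => gaussianReal 0 1) := by
  refine (MeasurePreserving.map_eq (measurePreserving_pi _ _ fun i => ?_)).symm
  refine ⟨measurable_id.const_mul _, ?_⟩
  have h := gaussianReal_map_const_mul (μ := 0) (v := 1) (Real.sqrt N)
  have h3 : gaussianReal (Real.sqrt N * 0) (⟨Real.sqrt N ^ 2, sq_nonneg _⟩ * 1)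
      = gaussianReal 0 N := by
    rw [mul_zero]
    congr 1
    ext
    simp [Real.sq_sqrt N.2]
    exact mul_one N
  exact h.trans h3

lemma aux_core (n : ℕ) (hn : 0 < n) (N Γ : ℝ≥0) (hN : 0 < N) (hΓ : 0 < Γ)
    (x : Fin n → ℝ) :
    Measure.map (fun z : Fin n → ℝ =>
        (n : ℝ) * ((1/2) * Real.log (1 + (Γ:ℝ)/N))
          + (∑ i, (x i + z i)^2) / (2*((N:ℝ)+Γ)) - (∑ i, (z i)^2) / (2*(N:ℝ)))
      (Measure.pi fun _ : Fin n => gaussianReal 0 N)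
  = Measure.map (fun zt : Fin n → ℝ =>
        (n : ℝ) * ((1/2) * Real.log (1 + (Γ:ℝ)/N))
          + (n : ℝ) * ((∑ i, x i ^2)/(n:ℝ)) / (2*(Γ:ℝ))
          - ((Γ:ℝ) / (2*((N:ℝ)+Γ)))
              * ∑ i, (zt i - Real.sqrt ((N:ℝ) * ((∑ j, x j ^2)/(n:ℝ)))/(Γ:ℝ))^2)
      (Measure.pi fun _ : Fin n => gaussianReal 0 1) := by
  have hNr : (0:ℝ) < N := hN
  have hΓr : (0:ℝ) < Γ := hΓ
  have hGN : (0:ℝ) < (N:ℝ)+Γ := by positivity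
  have hnr : (0:ℝ) < n := Nat.cast_pos.mpr hn
  set s : ℝ := (∑ j, x j ^2)/(n:ℝ) with hs
  have hs0 : 0 ≤ s := by positivity
  have hns : (n:ℝ) * s = ∑ j, x j ^2 := by rw [hs]; field_simp
  set c : ℝ := (n : ℝ) * ((1/2) * Real.log (1 + (Γ:ℝ)/N)) with hc
  have hsqN : Real.sqrt N ^ 2 = (N:ℝ) := Real.sq_sqrt N.2
  have hsqNs : Real.sqrt ((N:ℝ)*s) ^ 2 = (N:ℝ)*s := Real.sq_sqrt (by positivity)
  set a : Fin n → ℝ := fun i => (Real.sqrt N/((N:ℝ)+Γ)) * x i with ha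
  set b : Fin n → ℝ := fun _ => Real.sqrt ((N:ℝ)*s)/((N:ℝ)+Γ) with hb
  set h : ℝ × ℝ → ℝ :=
    fun q => c + (∑ j, x j ^2)/(2*((N:ℝ)+Γ)) + q.1 - ((Γ:ℝ)/(2*((N:ℝ)+Γ))) * q.2 with hh
  have hmeas_h : Measurable h :=
    ((continuous_const.add continuous_fst).sub
      (continuous_const.mul continuous_snd)).measurable
  have hmeas_pair : ∀ cc : Fin n → ℝ,
      Measurable fun u : Fin n → ℝ => (∑ i, cc i * u i, ∑ i, (u i)^2) := fun cc =>
    (Finset.measurable_sum _ fun i _ =>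
        (measurable_pi_apply i : Measurable fun u : Fin n → ℝ => u i).const_mul (cc i)).prodMk
      (Finset.measurable_sum _ fun i _ => (measurable_pi_apply i).pow_const 2)
  have hmeas_scale : Measurable fun u : Fin n → ℝ => fun i => Real.sqrt N * u i :=
    measurable_pi_lambda _ fun i => (measurable_pi_apply i).const_mul _
  have hmeas_L : Measurable fun z : Fin n → ℝ =>
      c + (∑ i, (x i + z i)^2) / (2*((N:ℝ)+Γ)) - (∑ i, (z i)^2) / (2*(N:ℝ)) := by
    apply Measurable.sub
    · exact measurable_const.add ((Finset.measurable_sum _ fun i _ =>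
        ((measurable_const.add (measurable_pi_apply i)).pow_const 2)).div_const _)
    · exact (Finset.measurable_sum _ fun i _ =>
        (measurable_pi_apply i).pow_const 2).div_const _
  -- claim 1 : L ∘ scale = h ∘ pair_a
  have claim1 : (fun z : Fin n → ℝ =>
        c + (∑ i, (x i + z i)^2) / (2*((N:ℝ)+Γ)) - (∑ i, (z i)^2) / (2*(N:ℝ)))
        ∘ (fun u : Fin n → ℝ => fun i => Real.sqrt N * u i)
      = h ∘ (fun u : Fin n → ℝ => (∑ i, a i * u i, ∑ i, (u i)^2)) := by
    funext u
    simp only [Function.comp_apply, hh]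
    have e1 : ∑ i, (x i + Real.sqrt N * u i)^2
        = (∑ j, x j ^2) + 2*Real.sqrt N*(∑ i, x i * u i) + (N:ℝ) * ∑ i, (u i)^2 := by
      calc ∑ i, (x i + Real.sqrt N * u i)^2
          = ∑ i, (x i ^2 + 2*Real.sqrt N*(x i * u i) + (N:ℝ)*(u i)^2) :=
            Finset.sum_congr rfl fun i _ => by linear_combination (u i)^2 * hsqN
        _ = (∑ j, x j ^2) + 2*Real.sqrt N*(∑ i, x i * u i) + (N:ℝ) * ∑ i, (u i)^2 := by
            rw [Finset.sum_add_distrib, Finset.sum_add_distrib, ← Finset.mul_sum,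
              ← Finset.mul_sum]
    have e2 : ∑ i, (Real.sqrt N * u i)^2 = (N:ℝ) * ∑ i, (u i)^2 := by
      simp_rw [mul_pow, hsqN]
      rw [Finset.mul_sum]
    have e3 : ∑ i, a i * u i = (Real.sqrt N/((N:ℝ)+Γ)) * ∑ i, x i * u i := by
      rw [Finset.mul_sum]
      exact Finset.sum_congr rfl fun i _ => by rw [ha]; ring
    rw [e1, e2, e3]
    field_simp
    ring
  -- claim 2 : RHS fun = h ∘ pair_b
  have claim2 : (fun zt : Fin n → ℝ =>
        c + (n : ℝ) * s / (2*(Γ:ℝ))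
          - ((Γ:ℝ) / (2*((N:ℝ)+Γ))) * ∑ i, (zt i - Real.sqrt ((N:ℝ)*s)/(Γ:ℝ))^2)
      = h ∘ (fun u : Fin n → ℝ => (∑ i, b i * u i, ∑ i, (u i)^2)) := by
    funext zt
    simp only [Function.comp_apply, hh]
    have hK2 : (Real.sqrt ((N:ℝ)*s)/(Γ:ℝ))^2 = ((N:ℝ)*s)/(Γ:ℝ)^2 := by
      rw [div_pow, hsqNs]
    have e4 : ∑ i, (zt i - Real.sqrt ((N:ℝ)*s)/(Γ:ℝ))^2
        = (∑ i, (zt i)^2) - 2*(Real.sqrt ((N:ℝ)*s)/(Γ:ℝ))*(∑ i, zt i)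
            + (n:ℝ) * (((N:ℝ)*s)/(Γ:ℝ)^2) := by
      calc ∑ i, (zt i - Real.sqrt ((N:ℝ)*s)/(Γ:ℝ))^2
          = ∑ i, ((zt i)^2 - 2*(Real.sqrt ((N:ℝ)*s)/(Γ:ℝ))*(zt i)
              + ((N:ℝ)*s)/(Γ:ℝ)^2) :=
            Finset.sum_congr rfl fun i _ => by linear_combination hK2
        _ = _ := by
            rw [Finset.sum_add_distrib, Finset.sum_sub_distrib, ← Finset.mul_sum,
              Finset.sum_const, Finset.card_univ, Fintype.card_fin, nsmul_eq_mul]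
    have e5 : ∑ i, b i * zt i = (Real.sqrt ((N:ℝ)*s)/((N:ℝ)+Γ)) * ∑ i, zt i := by
      rw [Finset.mul_sum]
    rw [e4, e5, ← hns]
    field_simp
    ring
  have hab : ∑ i, a i ^ 2 = ∑ i, b i ^ 2 := by
    calc ∑ i, a i ^2 = ((N:ℝ)/((N:ℝ)+Γ)^2) * ∑ j, x j ^2 := by
          simp_rw [ha, mul_pow, div_pow, hsqN]
          rw [← Finset.mul_sum]
      _ = (n:ℝ) * (((N:ℝ)*s)/((N:ℝ)+Γ)^2) := by rw [← hns]; ring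
      _ = ∑ i, b i ^2 := by
          rw [hb]
          simp only
          rw [Finset.sum_const, Finset.card_univ, Fintype.card_fin, nsmul_eq_mul,
            div_pow, hsqNs]
  calc Measure.map (fun z : Fin n → ℝ =>
          c + (∑ i, (x i + z i)^2) / (2*((N:ℝ)+Γ)) - (∑ i, (z i)^2) / (2*(N:ℝ)))
        (Measure.pi fun _ : Fin n => gaussianReal 0 N)
      = Measure.map (h ∘ (fun u : Fin n → ℝ => (∑ i, a i * u i, ∑ i, (u i)^2)))
          (Measure.pi fun _ : Fin n => gaussianReal 0 1) := by
        rw [aux_pi_scale n N hN, Measure.map_map hmeas_L hmeas_scale, claim1]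
    _ = Measure.map h (Measure.map (fun u : Fin n → ℝ => (∑ i, a i * u i, ∑ i, (u i)^2))
          (Measure.pi fun _ : Fin n => gaussianReal 0 1)) :=
        (Measure.map_map hmeas_h (hmeas_pair a)).symm
    _ = Measure.map h (Measure.map (fun u : Fin n → ℝ => (∑ i, b i * u i, ∑ i, (u i)^2))
          (Measure.pi fun _ : Fin n => gaussianReal 0 1)) := by
        rw [aux_key_pi n a b hab]
    _ = Measure.map (h ∘ (fun u : Fin n → ℝ => (∑ i, b i * u i, ∑ i, (u i)^2)))
          (Measure.pi fun _ : Fin n => gaussianReal 0 1) :=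
        Measure.map_map hmeas_h (hmeas_pair b)
    _ = _ := by rw [← claim2]

/-- For the AWGN channel `W(·|x) = N(x, N I_n)` on `ℝⁿ` and
`q = N(0, (Γ+N) I_n)`, with `X ~ P̄` arbitrary, `Z ~ N(0, N I_n)` independent of `X`,
and `Y = X + Z`, the random variable `log (W(Y|X)/q(Y))` has the same law as
`n C(Γ) + n S/(2Γ) − (Γ/(2(N+Γ))) Σᵢ (Z̃ᵢ − √(N S)/Γ)²`, where `S = ‖X‖²/n` and
the `Z̃ᵢ` are i.i.d. standard normal independent of `S`. -/
theorem awgn_llr_distribution_eq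
    (n : ℕ) (hn : 0 < n) (N Γ : ℝ≥0) (hN : 0 < N) (hΓ : 0 < Γ)
    (Ω : Type*) [MeasureSpace Ω] [IsProbabilityMeasure (ℙ : Measure Ω)]
    (X Z : Ω → (Fin n → ℝ)) (Zt : Ω → (Fin n → ℝ))
    (hX : Measurable X) (hZ : Measurable Z) (hZt : Measurable Zt)
    (hlawZ : Measure.map Z ℙ = Measure.pi fun _ : Fin n => gaussianReal 0 N)
    (hindep : IndepFun X Z)
    (S : Ω → ℝ) (hS : ∀ ω, S ω = (∑ i, X ω i ^ 2) / n)
    (hjoint : Measure.map (fun ω => (S ω, Zt ω)) ℙ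
      = (Measure.map S ℙ).prod (Measure.pi fun _ : Fin n => gaussianReal 0 1)) :
    Measure.map
      (fun ω => Real.log
        ((∏ i, gaussianPDFReal (X ω i) N (X ω i + Z ω i)) /
          ∏ i, gaussianPDFReal 0 (Γ + N) (X ω i + Z ω i))) ℙ
    = Measure.map
      (fun ω => (n : ℝ) * ((1 / 2) * Real.log (1 + (Γ : ℝ) / N))
        + (n : ℝ) * S ω / (2 * Γ)
        - ((Γ : ℝ) / (2 * ((N : ℝ) + Γ)))
            * ∑ i, (Zt ω i - Real.sqrt ((N : ℝ) * S ω) / Γ) ^ 2) ℙ := by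
  set γN : Measure (Fin n → ℝ) := Measure.pi fun _ : Fin n => gaussianReal 0 N with hγN
  set γ1 : Measure (Fin n → ℝ) := Measure.pi fun _ : Fin n => gaussianReal 0 1 with hγ1
  set σ : (Fin n → ℝ) → ℝ := fun x => (∑ i, x i ^ 2) / (n : ℝ) with hσdef
  have hσ : Measurable σ :=
    (Finset.measurable_sum _ fun i _ => (measurable_pi_apply i).pow_const 2).div_const _
  have hSX : S = σ ∘ X := funext fun ω => by rw [hS ω]; rfl
  have hSmeas : Measurable S := hSX ▸ hσ.comp hX
  set φ : (Fin n → ℝ) × (Fin n → ℝ) → ℝ := fun p =>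
    (n : ℝ) * ((1/2) * Real.log (1 + (Γ:ℝ)/N))
      + (∑ i, (p.1 i + p.2 i)^2) / (2*((N:ℝ)+Γ)) - (∑ i, (p.2 i)^2) / (2*(N:ℝ)) with hφdef
  have hφ : Measurable φ := by
    apply Measurable.sub
    · exact measurable_const.add ((Finset.measurable_sum _ fun i _ =>
        (((measurable_pi_apply i).comp measurable_fst).add
          ((measurable_pi_apply i).comp measurable_snd)).pow_const 2).div_const _)
    · exact (Finset.measurable_sum _ fun i _ =>
        ((measurable_pi_apply i).comp measurable_snd).pow_const 2).div_const _
  set G : ℝ × (Fin n → ℝ) → ℝ := fun p =>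
    (n : ℝ) * ((1/2) * Real.log (1 + (Γ:ℝ)/N))
      + (n : ℝ) * p.1 / (2*(Γ:ℝ))
      - ((Γ:ℝ) / (2*((N:ℝ)+Γ))) * ∑ i, (p.2 i - Real.sqrt ((N:ℝ) * p.1)/(Γ:ℝ))^2
    with hGdef
  have hG : Measurable G := by
    apply Measurable.sub
    · exact measurable_const.add ((measurable_fst.const_mul _).div_const _)
    · apply Measurable.const_mul
      apply Finset.measurable_sum
      intro i _
      exact (((measurable_pi_apply i).comp measurable_snd).sub
        ((Real.continuous_sqrt.measurable.comp (measurable_fst.const_mul _)).div_const _)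
        ).pow_const 2
  haveI : IsProbabilityMeasure (Measure.map X ℙ) := Measure.isProbabilityMeasure_map hX.aemeasurable
  -- rewrite LHS integrand
  have hF : (fun ω => Real.log
        ((∏ i, gaussianPDFReal (X ω i) N (X ω i + Z ω i)) /
          ∏ i, gaussianPDFReal 0 (Γ + N) (X ω i + Z ω i)))
      = φ ∘ (fun ω => (X ω, Z ω)) :=
    funext fun ω => aux_logpdf n N Γ hN hΓ (X ω) (Z ω)
  have hpairXZ : Measure.map (fun ω => (X ω, Z ω)) ℙ = (Measure.map X ℙ).prod γN := by
    rw [(indepFun_iff_map_prod_eq_prod_map_map hX.aemeasurable hZ.aemeasurable).mp hindep,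
      hlawZ]
  have hLHS : Measure.map
      (fun ω => Real.log
        ((∏ i, gaussianPDFReal (X ω i) N (X ω i + Z ω i)) /
          ∏ i, gaussianPDFReal 0 (Γ + N) (X ω i + Z ω i))) ℙ
      = Measure.map φ ((Measure.map X ℙ).prod γN) := by
    rw [hF, ← Measure.map_map hφ (hX.prodMk hZ), hpairXZ]
  have hRHS : Measure.map
      (fun ω => (n : ℝ) * ((1 / 2) * Real.log (1 + (Γ : ℝ) / N))
        + (n : ℝ) * S ω / (2 * Γ)
        - ((Γ : ℝ) / (2 * ((N : ℝ) + Γ)))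
            * ∑ i, (Zt ω i - Real.sqrt ((N : ℝ) * S ω) / Γ) ^ 2) ℙ
      = Measure.map G ((Measure.map S ℙ).prod γ1) := by
    have : (fun ω => (n : ℝ) * ((1 / 2) * Real.log (1 + (Γ : ℝ) / N))
        + (n : ℝ) * S ω / (2 * Γ)
        - ((Γ : ℝ) / (2 * ((N : ℝ) + Γ)))
            * ∑ i, (Zt ω i - Real.sqrt ((N : ℝ) * S ω) / Γ) ^ 2)
        = G ∘ (fun ω => (S ω, Zt ω)) := by
      funext ω; simp only [hGdef, Function.comp_apply]
    rw [this, ← Measure.map_map hG (hSmeas.prodMk hZt), hjoint]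
  rw [hLHS, hRHS, hSX, ← Measure.map_map hσ hX]
  -- now compare the two product pushforwards
  ext A hA
  rw [Measure.map_apply hφ hA, Measure.map_apply hG hA,
    Measure.prod_apply (hφ hA), Measure.prod_apply (hG hA),
    lintegral_map (measurable_measure_prodMk_left (hG hA)) hσ]
  refine lintegral_congr fun x => ?_
  have h1 : Measurable fun z : Fin n → ℝ => φ (x, z) :=
    hφ.comp (measurable_const.prodMk measurable_id)
  have h2 : Measurable fun zt : Fin n → ℝ => G (σ x, zt) :=
    hG.comp (measurable_const.prodMk measurable_id)
  have hkey := aux_core n hn N Γ hN hΓ x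
  have e1 : (fun z : Fin n → ℝ => φ (x, z)) = (fun z : Fin n → ℝ =>
      (n : ℝ) * ((1/2) * Real.log (1 + (Γ:ℝ)/N))
        + (∑ i, (x i + z i)^2) / (2*((N:ℝ)+Γ)) - (∑ i, (z i)^2) / (2*(N:ℝ))) := rfl
  have e2 : (fun zt : Fin n → ℝ => G (σ x, zt)) = (fun zt : Fin n → ℝ =>
      (n : ℝ) * ((1/2) * Real.log (1 + (Γ:ℝ)/N))
        + (n : ℝ) * ((∑ i, x i ^2)/(n:ℝ)) / (2*(Γ:ℝ))
        - ((Γ:ℝ) / (2*((N:ℝ)+Γ)))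
            * ∑ i, (zt i - Real.sqrt ((N:ℝ) * ((∑ j, x j ^2)/(n:ℝ)))/(Γ:ℝ))^2) := rfl
  have : Measure.map (fun z : Fin n → ℝ => φ (x, z)) γN
      = Measure.map (fun zt : Fin n → ℝ => G (σ x, zt)) γ1 := by
    rw [e1, e2, hγN, hγ1]; exact hkey
  calc γN (Prod.mk x ⁻¹' (φ ⁻¹' A))
      = Measure.map (fun z : Fin n → ℝ => φ (x, z)) γN A := by
        rw [Measure.map_apply h1 hA]; rfl
    _ = Measure.map (fun zt : Fin n → ℝ => G (σ x, zt)) γ1 A := by rw [this]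
    _ = γ1 (Prod.mk (σ x) ⁻¹' (G ⁻¹' A)) := by rw [Measure.map_apply h2 hA]; rfl
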